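/- For any integer m ≥ 2, if L1 is accepted by a complete DFA with m states and L2 is accepted by a complete DFA with 1 state, then there exists a complete DFA with at most 2^(m-1) + 1 states accepting L1^R · L2. -/

import Mathlib

open Computability

/-- The reversal of a language. -/
def revLang {α : Type} (L : Language α) : Language α := {w | w.reverse ∈ L}

/-- For L₁ accepted by an m-state DFA (m ≥ 2) and L₂ by a 1-state DFA, there is a DFA with
    at most 2^(m-1)+1 states accepting L₁^R·L₂. -/
theorem revcat_n_eq_one_upper (m : ℕ) (hm : 2 ≤ m)
    (α σ₁ σ₂ : Type) [Fintype σ₁] [Fintype σ₂]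
    (A : DFA α σ₁) (B : DFA α σ₂) (L₁ L₂ : Language α)
    (hA : A.accepts = L₁) (hB : B.accepts = L₂)
    (hcm : Fintype.card σ₁ = m) (hcn : Fintype.card σ₂ = 1) :
    ∃ (σ : Type) (inst : Fintype σ) (C : DFA α σ),
      C.accepts = revLang L₁ * L₂ ∧ @Fintype.card σ inst ≤ 2 ^ (m - 1) + 1 := by
  classical
  have hsub : ∀ s : σ₂, s = B.start := fun s =>
    Fintype.card_le_one_iff.mp (le_of_eq hcn) s B.start
  by_cases hb : B.start ∈ B.accept
  · -- L₂ = univ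
    have hL2 : ∀ w : List α, w ∈ L₂ := by
      intro w
      rw [← hB, DFA.mem_accepts]
      rw [hsub (B.eval w)]; exact hb
    -- T w : states of A from which reading w.reverse reaches accept
    set T : List α → Set σ₁ := fun w => {s | A.evalFrom s w.reverse ∈ A.accept} with hT
    have T_nil : T [] = A.accept := by ext s; simp [hT]
    have T_snoc : ∀ (w : List α) (a : α), T (w ++ [a]) = {s | A.step s a ∈ T w} := by
      intro w a; ext s; simp [hT, DFA.evalFrom]
    -- the DFA
    refine ⟨Option {S : Set σ₁ // A.start ∉ S}, inferInstance,
      ⟨fun q a => match q with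
        | none => none
        | some S => if h : A.start ∈ {s | A.step s a ∈ S.1} then none
            else some ⟨{s | A.step s a ∈ S.1}, h⟩,
       if h : A.start ∈ A.accept then none else some ⟨A.accept, h⟩,
       {none}⟩, ?_, ?_⟩
    · set C : DFA α (Option {S : Set σ₁ // A.start ∉ S}) :=
        ⟨fun q a => match q with
          | none => none
          | some S => if h : A.start ∈ {s | A.step s a ∈ S.1} then none
              else some ⟨{s | A.step s a ∈ S.1}, h⟩,
         if h : A.start ∈ A.accept then none else some ⟨A.accept, h⟩,
         {none}⟩ with hC
      show C.accepts = _
      set P : List α → Prop := fun w => ∃ p q : List α, p ++ q = w ∧ A.start ∈ T p with hP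
      have inv : ∀ w : List α,
          (P w ∧ C.eval w = none) ∨ (¬ P w ∧ ∃ h, C.eval w = some ⟨T w, h⟩) := by
        intro w
        induction w using List.reverseRecOn with
        | nil =>
          by_cases h0 : A.start ∈ A.accept
          · left
            constructor
            · exact ⟨[], [], rfl, by rw [T_nil]; exact h0⟩
            · show C.start = none
              simp [hC, h0]
          · right
            constructor
            · rintro ⟨p, q, hpq, hp⟩
              rw [List.append_eq_nil_iff] at hpq
              rw [hpq.1, T_nil] at hp; exact h0 hp
            · refine ⟨by rw [T_nil]; exact h0, ?_⟩
              show C.start = some _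
              simp [hC, h0, T_nil]
        | append_singleton w a ih =>
          have heval : C.eval (w ++ [a]) = C.step (C.eval w) a :=
            C.evalFrom_append_singleton C.start w a
          rw [heval]
          rcases ih with ⟨hPw, hev⟩ | ⟨hPw, h, hev⟩
          · left
            refine ⟨?_, by rw [hev]⟩
            obtain ⟨p, q, hpq, hp⟩ := hPw
            exact ⟨p, q ++ [a], by rw [← hpq, List.append_assoc], hp⟩
          · rw [hev]
            by_cases hnew : A.start ∈ {s | A.step s a ∈ T w}
            · left
              refine ⟨⟨w ++ [a], [], by simp, by rw [T_snoc]; exact hnew⟩, ?_⟩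
              show C.step _ a = none
              simp [hC, hnew]
              exact hnew
            · right
              refine ⟨?_, ?_⟩
              · rintro ⟨p, q, hpq, hp⟩
                rcases q.eq_nil_or_concat with rfl | ⟨q', a', rfl⟩
                · rw [List.append_nil] at hpq
                  subst hpq
                  rw [T_snoc] at hp
                  exact hnew hp
                · have := congrArg List.reverse hpq
                  simp at this
                  obtain ⟨h1, h2⟩ := this
                  exact hPw ⟨p, q', by
                    have := congrArg List.reverse h2
                    simpa using this, hp⟩
              · refine ⟨by rw [T_snoc]; exact hnew, ?_⟩
                show C.step _ a = some _
                simp only [hC, DFA.mk.injEq]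
                rw [dif_neg hnew]
                simp [T_snoc]
          done
      ext w
      rw [DFA.mem_accepts]
      have : (C.eval w ∈ C.accept) ↔ C.eval w = none := by
        show C.eval w ∈ ({none} : Set _) ↔ _
        simp
      rw [this]
      have hiff : C.eval w = none ↔ P w := by
        rcases inv w with ⟨h1, h2⟩ | ⟨h1, h, h2⟩
        · simp [h1, h2]
        · rw [h2]; simp [h1]
      rw [hiff]
      constructor
      · rintro ⟨p, q, hpq, hp⟩
        rw [Language.mem_mul]
        refine ⟨p, ?_, q, hL2 q, hpq⟩
        show p.reverse ∈ L₁
        rw [← hA, DFA.mem_accepts]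
        exact hp
      · rw [Language.mem_mul]
        rintro ⟨p, hp, q, _, hpq⟩
        refine ⟨p, q, hpq, ?_⟩
        have : p.reverse ∈ A.accepts := by rw [hA]; exact hp
        exact (DFA.mem_accepts A).mp this
    · rw [Fintype.card_option]
      have e : {S : Set σ₁ // A.start ∉ S} ≃ Set {s : σ₁ // s ≠ A.start} :=
        { toFun := fun S => {s | s.1 ∈ S.1}
          invFun := fun Tt => ⟨{s | ∃ h : s ≠ A.start, (⟨s, h⟩ : {s : σ₁ // s ≠ A.start}) ∈ Tt},
            by simp⟩
          left_inv := by
            rintro ⟨S, hS⟩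
            ext s
            simp only [Set.mem_setOf_eq]
            constructor
            · rintro ⟨h, hs⟩; exact hs
            · intro hs
              exact ⟨fun h => hS (h ▸ hs), hs⟩
          right_inv := by
            intro Tt
            ext ⟨s, hs⟩
            constructor
            · rintro ⟨h, ht⟩; exact ht
            · intro ht; exact ⟨hs, ht⟩ }
      rw [Fintype.card_congr e, Fintype.card_set]
      have : Fintype.card {s : σ₁ // s ≠ A.start} = m - 1 := by
        rw [Fintype.card_subtype_compl, Fintype.card_subtype_eq, hcm]
      rw [this]
  · -- L₂ = ∅
    refine ⟨Unit, inferInstance, ⟨fun _ _ => (), (), ∅⟩, ?_, ?_⟩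
    · have hL2 : L₂ = 0 := by
        rw [← hB]
        ext w
        rw [DFA.mem_accepts]
        simp only [hsub (DFA.eval _ w)]
        simpa using hb
      rw [hL2, mul_zero]
      ext w
      rw [DFA.mem_accepts]
      simp
    · simp
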